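/- For every m ≥ 4, the global defensive alliance number of P₄ ∘ Cₘ equals 2m − 1. -/

import Mathlib

/-- Lexicographic product of simple graphs. -/
def lexProd {α β : Type*} (G : SimpleGraph α) (H : SimpleGraph β) :
    SimpleGraph (α × β) where
  Adj x y := G.Adj x.1 y.1 ∨ (x.1 = y.1 ∧ H.Adj x.2 y.2)
  symm := by
    constructor
    rintro x y (h | ⟨h1, h2⟩)
    · exact Or.inl h.symm
    · exact Or.inr ⟨h1.symm, h2.symm⟩
  loopless := by
    constructor
    rintro x (h | ⟨_, h2⟩)
    · exact G.irrefl h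
    · exact H.irrefl h2

/-- Closed neighborhood N[v]. -/
def closedNbhd {α : Type*} (G : SimpleGraph α) (v : α) : Set α :=
  insert v (G.neighborSet v)

/-- A defensive alliance: every vertex of S is defended. -/
def IsDefensiveAlliance {α : Type*} (G : SimpleGraph α) (S : Set α) : Prop :=
  ∀ v ∈ S, ((closedNbhd G v) \ S).ncard ≤ ((closedNbhd G v) ∩ S).ncard

/-- A global defensive alliance: a defensive alliance which is also dominating. -/
def IsGDA {α : Type*} (G : SimpleGraph α) (S : Set α) : Prop :=
  IsDefensiveAlliance G S ∧ ∀ v, v ∈ S ∨ ∃ u ∈ S, G.Adj v u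

/-- The global defensive alliance number. -/
noncomputable def gdaNumber {α : Type*} (G : SimpleGraph α) : ℕ :=
  sInf {k | ∃ S : Set α, IsGDA G S ∧ S.ncard = k}

/-- Number of vertices of S in the j-th copy of G² (copies indexed 1,…,n). -/
noncomputable def copyCount {n m : ℕ} (S : Set (Fin n × Fin m)) (j : ℕ) : ℕ :=
  (S ∩ {p | (p.1 : ℕ) + 1 = j}).ncard

open SimpleGraph Set
open Fin.CommRing Fin.NatCast

variable {n : ℕ}

lemma lexProd_adj {α β : Type*} {G : SimpleGraph α} {H : SimpleGraph β} {x y : α × β} :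
    (lexProd G H).Adj x y ↔ G.Adj x.1 y.1 ∨ (x.1 = y.1 ∧ H.Adj x.2 y.2) := Iff.rfl

lemma mem_closedNbhd {α : Type*} {G : SimpleGraph α} {v p : α} :
    p ∈ closedNbhd G v ↔ p = v ∨ G.Adj v p := by
  simp [closedNbhd]

-- import all of t1 here (assume compiled separately); re-paste:
lemma cyc_adj {j b : Fin (n+4)} :
    (cycleGraph (n+4)).Adj j b ↔ b = j + 1 ∨ b = j - 1 := by
  rw [cycleGraph_adj]
  constructor
  · rintro (h | h)
    · right; rw [← h]; ring
    · left; rw [← h]; ring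
  · rintro (rfl | rfl)
    · right; ring
    · left; ring

lemma path_adj_0 (a : Fin 4) : (pathGraph 4).Adj 0 a ↔ a = 1 := by
  rw [pathGraph_adj]; fin_cases a <;> decide
lemma path_adj_1 (a : Fin 4) : (pathGraph 4).Adj 1 a ↔ a = 0 ∨ a = 2 := by
  rw [pathGraph_adj]; fin_cases a <;> decide
lemma path_adj_2 (a : Fin 4) : (pathGraph 4).Adj 2 a ↔ a = 1 ∨ a = 3 := by
  rw [pathGraph_adj]; fin_cases a <;> decide
lemma path_adj_3 (a : Fin 4) : (pathGraph 4).Adj 3 a ↔ a = 2 := by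
  rw [pathGraph_adj]; fin_cases a <;> decide

lemma fin_one_val : ((1 : Fin (n+4)) : ℕ) = 1 := Fin.val_one (n+2)
lemma fin_two_val : ((2 : Fin (n+4)) : ℕ) = 2 := by
  have h : ((2 : Fin (n+4)) : ℕ) = 2 % (n+4) := rfl
  rw [h, Nat.mod_eq_of_lt (by omega)]
lemma fin_one_ne_zero : (1 : Fin (n+4)) ≠ 0 := by
  intro h
  have hv : ((1 : Fin (n+4)) : ℕ) = 1 := fin_one_val
  rw [h] at hv; simp at hv
lemma fin_two_ne_zero : (2 : Fin (n+4)) ≠ 0 := by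
  intro h
  have hv : ((2 : Fin (n+4)) : ℕ) = 2 := fin_two_val
  rw [h] at hv; simp at hv
lemma fin_add_one_ne (j : Fin (n+4)) : j + 1 ≠ j := by
  intro h; apply fin_one_ne_zero (n := n)
  have h2 : (j + 1) - j = 0 := by rw [h]; simp
  rw [← h2]; ring
lemma fin_sub_one_ne (j : Fin (n+4)) : j - 1 ≠ j := by
  intro h; apply fin_one_ne_zero (n := n)
  have h2 : j - (j - 1) = 0 := by rw [h]; simp
  rw [← h2]; ring
lemma fin_add_one_ne_sub_one (j : Fin (n+4)) : j + 1 ≠ j - 1 := by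
  intro h; apply fin_two_ne_zero (n := n)
  have h2 : (j + 1) - (j - 1) = 0 := by rw [h]; simp
  rw [← h2]; ring


def col (n : ℕ) (c : Fin 4) : Set (Fin 4 × Fin (n+4)) := {p | p.1 = c}
def tri (n : ℕ) (c : Fin 4) (j : Fin (n+4)) : Set (Fin 4 × Fin (n+4)) :=
  {p | p.1 = c ∧ (p.2 = j ∨ p.2 = j + 1 ∨ p.2 = j - 1)}

local notation "G4" => lexProd (pathGraph 4) (cycleGraph (n+4))

lemma nbhd_0 (j : Fin (n+4)) : closedNbhd G4 (0, j) = col n 1 ∪ tri n 0 j := by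
  ext ⟨a, b⟩
  rw [mem_closedNbhd, lexProd_adj]
  simp only [col, tri, Set.mem_union, Set.mem_setOf_eq, Prod.mk.injEq, path_adj_0, cyc_adj]
  constructor
  · rintro (⟨rfl, rfl⟩ | rfl | ⟨rfl, h⟩) <;> tauto
  · rintro (rfl | ⟨rfl, (rfl | h)⟩) <;> tauto

lemma nbhd_1 (j : Fin (n+4)) : closedNbhd G4 (1, j) = (col n 0 ∪ col n 2) ∪ tri n 1 j := by
  ext ⟨a, b⟩
  rw [mem_closedNbhd, lexProd_adj]
  simp only [col, tri, Set.mem_union, Set.mem_setOf_eq, Prod.mk.injEq, path_adj_1, cyc_adj]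
  constructor
  · rintro (⟨rfl, rfl⟩ | (rfl | rfl) | ⟨rfl, h⟩) <;> tauto
  · rintro ((rfl | rfl) | ⟨rfl, (rfl | h)⟩) <;> tauto

lemma nbhd_2 (j : Fin (n+4)) : closedNbhd G4 (2, j) = (col n 1 ∪ col n 3) ∪ tri n 2 j := by
  ext ⟨a, b⟩
  rw [mem_closedNbhd, lexProd_adj]
  simp only [col, tri, Set.mem_union, Set.mem_setOf_eq, Prod.mk.injEq, path_adj_2, cyc_adj]
  constructor
  · rintro (⟨rfl, rfl⟩ | (rfl | rfl) | ⟨rfl, h⟩) <;> tauto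
  · rintro ((rfl | rfl) | ⟨rfl, (rfl | h)⟩) <;> tauto

lemma nbhd_3 (j : Fin (n+4)) : closedNbhd G4 (3, j) = col n 2 ∪ tri n 3 j := by
  ext ⟨a, b⟩
  rw [mem_closedNbhd, lexProd_adj]
  simp only [col, tri, Set.mem_union, Set.mem_setOf_eq, Prod.mk.injEq, path_adj_3, cyc_adj]
  constructor
  · rintro (⟨rfl, rfl⟩ | rfl | ⟨rfl, h⟩) <;> tauto
  · rintro (rfl | ⟨rfl, (rfl | h)⟩) <;> tauto
-- sections
lemma sect_eq (c : Fin 4) (T : Set (Fin (n+4))) :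
    {p : Fin 4 × Fin (n+4) | p.1 = c ∧ p.2 ∈ T} = Prod.mk c '' T := by
  ext ⟨a, b⟩
  constructor
  · rintro ⟨rfl, h⟩; exact ⟨b, h, rfl⟩
  · rintro ⟨x, hx, h⟩; cases h; exact ⟨rfl, hx⟩

lemma ncard_sect (c : Fin 4) (T : Set (Fin (n+4))) :
    Set.ncard {p : Fin 4 × Fin (n+4) | p.1 = c ∧ p.2 ∈ T} = T.ncard := by
  rw [sect_eq, Set.ncard_image_of_injective _ (fun x y h => (Prod.ext_iff.mp h).2)]

lemma col_eq_sect (c : Fin 4) : col n c = {p : Fin 4 × Fin (n+4) | p.1 = c ∧ p.2 ∈ Set.univ} := by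
  ext p; simp [col]

lemma ncard_col (c : Fin 4) : (col n c).ncard = n + 4 := by
  rw [col_eq_sect, ncard_sect, Set.ncard_univ, Nat.card_eq_fintype_card, Fintype.card_fin]

lemma tri_eq_sect (c : Fin 4) (j : Fin (n+4)) :
    tri n c j = {p : Fin 4 × Fin (n+4) | p.1 = c ∧ p.2 ∈ ({j, j+1, j-1} : Set (Fin (n+4)))} := by
  ext p; simp [tri]

lemma ncard_tri (c : Fin 4) (j : Fin (n+4)) : (tri n c j).ncard = 3 := by
  rw [tri_eq_sect, ncard_sect]
  rw [Set.ncard_insert_of_notMem (by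
    simp only [Set.mem_insert_iff, Set.mem_singleton_iff]
    push_neg
    exact ⟨fun h => fin_add_one_ne j h.symm, fun h => fin_sub_one_ne j h.symm⟩)]
  rw [Set.ncard_pair (fin_add_one_ne_sub_one j)]

lemma disj_col {c c' : Fin 4} (h : c ≠ c') : Disjoint (col n c) (col n c') := by
  rw [Set.disjoint_left]
  rintro p h1 h2
  exact h (h1 ▸ h2 ▸ rfl)

lemma disj_col_tri {c c' : Fin 4} (h : c ≠ c') (j : Fin (n+4)) :
    Disjoint (col n c) (tri n c' j) := by
  rw [Set.disjoint_left]
  rintro p h1 ⟨h2, _⟩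
  exact h (h1 ▸ h2 ▸ rfl)

-- count helpers
lemma ncard_union_inter {α : Type*} [Finite α] {A B : Set α} (S : Set α) (h : Disjoint A B) :
    ((A ∪ B) ∩ S).ncard = (A ∩ S).ncard + (B ∩ S).ncard := by
  rw [Set.union_inter_distrib_right]
  exact Set.ncard_union_eq (h.mono Set.inter_subset_left Set.inter_subset_left)

lemma ncard_union_diff {α : Type*} [Finite α] {A B : Set α} (S : Set α) (h : Disjoint A B) :
    ((A ∪ B) \ S).ncard = (A \ S).ncard + (B \ S).ncard := by
  rw [Set.union_diff_distrib]
  exact Set.ncard_union_eq (h.mono Set.diff_subset Set.diff_subset)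

lemma ncard_split {α : Type*} [Finite α] (A S : Set α) :
    (A \ S).ncard + (A ∩ S).ncard = A.ncard := by
  rw [add_comm]; exact Set.ncard_inter_add_ncard_diff_eq_ncard A S

variable {S : Set (Fin 4 × Fin (n+4))}

lemma defense1 (hdef : IsDefensiveAlliance G4 S) {j : Fin (n+4)} (hj : (1, j) ∈ S) :
    2*(n+4) + 3 ≤ 2*((col n 0 ∩ S).ncard + (col n 2 ∩ S).ncard) + 2*(tri n 1 j ∩ S).ncard := by
  have h := hdef _ hj
  rw [nbhd_1] at h
  have d02 : Disjoint (col n 0) (col n 2) := disj_col (by decide)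
  have dT : Disjoint (col n 0 ∪ col n 2) (tri n 1 j) :=
    Disjoint.union_left (disj_col_tri (by decide) j) (disj_col_tri (by decide) j)
  rw [ncard_union_diff S dT, ncard_union_diff S d02,
      ncard_union_inter S dT, ncard_union_inter S d02] at h
  have e0 := ncard_split (col n 0) S
  have e2 := ncard_split (col n 2) S
  have eT := ncard_split (tri n 1 j) S
  rw [ncard_col] at e0 e2
  rw [ncard_tri] at eT
  omega

lemma defense2 (hdef : IsDefensiveAlliance G4 S) {j : Fin (n+4)} (hj : (2, j) ∈ S) :
    2*(n+4) + 3 ≤ 2*((col n 1 ∩ S).ncard + (col n 3 ∩ S).ncard) + 2*(tri n 2 j ∩ S).ncard := by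
  have h := hdef _ hj
  rw [nbhd_2] at h
  have d02 : Disjoint (col n 1) (col n 3) := disj_col (by decide)
  have dT : Disjoint (col n 1 ∪ col n 3) (tri n 2 j) :=
    Disjoint.union_left (disj_col_tri (by decide) j) (disj_col_tri (by decide) j)
  rw [ncard_union_diff S dT, ncard_union_diff S d02,
      ncard_union_inter S dT, ncard_union_inter S d02] at h
  have e0 := ncard_split (col n 1) S
  have e2 := ncard_split (col n 3) S
  have eT := ncard_split (tri n 2 j) S
  rw [ncard_col] at e0 e2
  rw [ncard_tri] at eT
  omega

lemma defense0 (hdef : IsDefensiveAlliance G4 S) {j : Fin (n+4)} (hj : (0, j) ∈ S) :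
    n + 7 ≤ 2*(col n 1 ∩ S).ncard + 2*(tri n 0 j ∩ S).ncard := by
  have h := hdef _ hj
  rw [nbhd_0] at h
  have dT : Disjoint (col n 1) (tri n 0 j) := disj_col_tri (by decide) j
  rw [ncard_union_diff S dT, ncard_union_inter S dT] at h
  have e1 := ncard_split (col n 1) S
  have eT := ncard_split (tri n 0 j) S
  rw [ncard_col] at e1
  rw [ncard_tri] at eT
  omega

lemma defense3 (hdef : IsDefensiveAlliance G4 S) {j : Fin (n+4)} (hj : (3, j) ∈ S) :
    n + 7 ≤ 2*(col n 2 ∩ S).ncard + 2*(tri n 3 j ∩ S).ncard := by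
  have h := hdef _ hj
  rw [nbhd_3] at h
  have dT : Disjoint (col n 2) (tri n 3 j) := disj_col_tri (by decide) j
  rw [ncard_union_diff S dT, ncard_union_inter S dT] at h
  have e1 := ncard_split (col n 2) S
  have eT := ncard_split (tri n 3 j) S
  rw [ncard_col] at e1
  rw [ncard_tri] at eT
  omega

lemma tri_inter_le (c : Fin 4) (j : Fin (n+4)) : (tri n c j ∩ S).ncard ≤ 3 := by
  calc (tri n c j ∩ S).ncard ≤ (tri n c j).ncard :=
        Set.ncard_le_ncard Set.inter_subset_left (Set.toFinite _)
    _ = 3 := ncard_tri c j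

lemma exists_col1 (hS : IsGDA G4 S) : ∃ j, (1, j) ∈ S := by
  by_contra h
  push_neg at h
  have hc1 : col n 1 ∩ S = ∅ := by
    ext ⟨a, b⟩
    simp only [col, Set.mem_inter_iff, Set.mem_setOf_eq, Set.mem_empty_iff_false, iff_false]
    rintro ⟨rfl, hb⟩
    exact h b hb
  by_cases hc0 : ∃ j, (0, j) ∈ S
  · obtain ⟨j, hj⟩ := hc0
    have := defense0 hS.1 hj
    have ht := tri_inter_le (S := S) 0 j
    rw [hc1, Set.ncard_empty] at this
    omega
  · push_neg at hc0
    rcases hS.2 (0, 0) with hin | ⟨u, hu, hadj⟩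
    · exact hc0 0 hin
    · rw [lexProd_adj] at hadj
      rcases hadj with hp | ⟨heq, _⟩
      · rw [path_adj_0] at hp
        exact h u.2 (by rw [← hp]; exact hu)
      · have heq' : (0 : Fin 4) = u.1 := heq
        exact hc0 u.2 (by rw [heq', Prod.mk.eta]; exact hu)

lemma exists_col2 (hS : IsGDA G4 S) : ∃ j, (2, j) ∈ S := by
  by_contra h
  push_neg at h
  have hc2 : col n 2 ∩ S = ∅ := by
    ext ⟨a, b⟩
    simp only [col, Set.mem_inter_iff, Set.mem_setOf_eq, Set.mem_empty_iff_false, iff_false]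
    rintro ⟨rfl, hb⟩
    exact h b hb
  by_cases hc3 : ∃ j, (3, j) ∈ S
  · obtain ⟨j, hj⟩ := hc3
    have := defense3 hS.1 hj
    have ht := tri_inter_le (S := S) 3 j
    rw [hc2, Set.ncard_empty] at this
    omega
  · push_neg at hc3
    rcases hS.2 (3, 0) with hin | ⟨u, hu, hadj⟩
    · exact hc3 0 hin
    · rw [lexProd_adj] at hadj
      rcases hadj with hp | ⟨heq, _⟩
      · rw [path_adj_3] at hp
        exact h u.2 (by rw [← hp]; exact hu)
      · have heq' : (3 : Fin 4) = u.1 := heq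
        exact hc3 u.2 (by rw [heq', Prod.mk.eta]; exact hu)

lemma fin_closure (T : Set (Fin (n+4))) (hne : ∃ j, j ∈ T) (hcl : ∀ j ∈ T, j + 1 ∈ T) :
    ∀ x, x ∈ T := by
  obtain ⟨j0, hj0⟩ := hne
  have key : ∀ k : ℕ, j0 + (k : Fin (n+4)) ∈ T := by
    intro k
    induction k with
    | zero => simpa using hj0
    | succ k ih =>
        have hc : ((k + 1 : ℕ) : Fin (n+4)) = (k : Fin (n+4)) + 1 := by push_cast; ring
        rw [hc, ← add_assoc]
        exact hcl _ ih
  intro x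
  have h2 : (((x - j0).val : ℕ) : Fin (n+4)) = x - j0 := Fin.cast_val_eq_self _
  have h1 := key (x - j0).val
  rw [h2] at h1
  have h3 : j0 + (x - j0) = x := by ring
  rwa [h3] at h1

lemma partition_ncard : S.ncard = (col n 0 ∩ S).ncard + (col n 1 ∩ S).ncard
    + (col n 2 ∩ S).ncard + (col n 3 ∩ S).ncard := by
  have hSeq : S = ((col n 0 ∩ S) ∪ (col n 1 ∩ S)) ∪ ((col n 2 ∩ S) ∪ (col n 3 ∩ S)) := by
    ext ⟨a, b⟩
    simp only [Set.mem_union, Set.mem_inter_iff, col, Set.mem_setOf_eq]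
    constructor
    · intro hp
      fin_cases a <;> tauto
    · tauto
  have d (c c' : Fin 4) (h : c ≠ c') : Disjoint (col n c ∩ S) (col n c' ∩ S) :=
    (disj_col h).mono Set.inter_subset_left Set.inter_subset_left
  calc S.ncard = (((col n 0 ∩ S) ∪ (col n 1 ∩ S)) ∪ ((col n 2 ∩ S) ∪ (col n 3 ∩ S))).ncard := by
        rw [← hSeq]
    _ = _ := by
        rw [Set.ncard_union_eq (by
            apply Disjoint.union_left <;> apply Disjoint.union_right
            exacts [d 0 2 (by decide), d 0 3 (by decide), d 1 2 (by decide), d 1 3 (by decide)]),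
          Set.ncard_union_eq (d 0 1 (by decide)), Set.ncard_union_eq (d 2 3 (by decide))]
        ring

lemma lower_bound (hS : IsGDA G4 S) : 2*(n+4) - 1 ≤ S.ncard := by
  obtain ⟨j1, hj1⟩ := exists_col1 hS
  obtain ⟨j2, hj2⟩ := exists_col2 hS
  have hpart := partition_ncard (S := S)
  have h02' := defense1 hS.1 hj1
  have h13' := defense2 hS.1 hj2
  have ht1 := tri_inter_le (S := S) 1 j1
  have ht2 := tri_inter_le (S := S) 2 j2
  by_contra hcon
  push_neg at hcon
  -- tightness
  have hs02 : (col n 0 ∩ S).ncard + (col n 2 ∩ S).ncard = n + 3 := by omega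
  have hs1 : (col n 1 ∩ S).ncard ≤ n + 3 := by omega
  have hstep : ∀ j : Fin (n+4), (1, j) ∈ S → (1, j + 1) ∈ S := by
    intro j hj
    have hd := defense1 hS.1 hj
    have htle := tri_inter_le (S := S) 1 j
    have ht3 : (tri n 1 j ∩ S).ncard = 3 := by omega
    have hsub : tri n 1 j ∩ S = tri n 1 j := by
      apply Set.eq_of_subset_of_ncard_le Set.inter_subset_left
      rw [ht3, ncard_tri]
    have hmem : (1, j + 1) ∈ tri n 1 j := ⟨rfl, Or.inr (Or.inl rfl)⟩
    rw [← hsub] at hmem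
    exact hmem.2
  have hall : ∀ x : Fin (n+4), (1, x) ∈ S :=
    fin_closure {x | (1, x) ∈ S} ⟨j1, hj1⟩ (fun j hj => hstep j hj)
  have hcol1 : col n 1 ∩ S = col n 1 := by
    ext ⟨a, b⟩
    simp only [col, Set.mem_inter_iff, Set.mem_setOf_eq, and_iff_left_iff_imp]
    rintro rfl
    exact hall b
  have : (col n 1 ∩ S).ncard = n + 4 := by rw [hcol1, ncard_col]
  omega

def S0 (n : ℕ) : Set (Fin 4 × Fin (n+4)) := {p | p.1 = 1 ∨ (p.1 = 2 ∧ p.2 ≠ 0)}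

lemma ncard_S0 : (S0 n).ncard = 2*(n+4) - 1 := by
  have hsplit : S0 n = {p : Fin 4 × Fin (n+4) | p.1 = 1 ∧ p.2 ∈ Set.univ}
      ∪ {p : Fin 4 × Fin (n+4) | p.1 = 2 ∧ p.2 ∈ ({0}ᶜ : Set (Fin (n+4)))} := by
    ext ⟨a, b⟩
    simp only [S0, Set.mem_union, Set.mem_setOf_eq, Set.mem_univ, and_true, Set.mem_compl_iff,
      Set.mem_singleton_iff]
  have hd : Disjoint {p : Fin 4 × Fin (n+4) | p.1 = 1 ∧ p.2 ∈ Set.univ}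
      {p : Fin 4 × Fin (n+4) | p.1 = 2 ∧ p.2 ∈ ({0}ᶜ : Set (Fin (n+4)))} := by
    rw [Set.disjoint_left]
    rintro p ⟨h1, -⟩ ⟨h2, -⟩
    rw [h1] at h2
    exact absurd h2 (by decide)
  have hcompl : ({0}ᶜ : Set (Fin (n+4))).ncard = n + 3 := by
    have h := Set.ncard_add_ncard_compl ({0} : Set (Fin (n+4)))
    rw [Set.ncard_singleton, Nat.card_eq_fintype_card, Fintype.card_fin] at h
    omega
  rw [hsplit, Set.ncard_union_eq hd, ncard_sect, ncard_sect, hcompl, Set.ncard_univ,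
    Nat.card_eq_fintype_card, Fintype.card_fin]
  omega

lemma S0_defense : IsDefensiveAlliance G4 (S0 n) := by
  rintro ⟨c, j⟩ hv
  rcases hv with hc1 | ⟨hc2, hj0⟩
  · -- c = 1
    have hc1' : c = 1 := hc1
    subst hc1'
    set f : Fin 4 × Fin (n+4) → Fin 4 × Fin (n+4) :=
      fun p => if p.1 = 0 then (if p.2 = 0 then ((1 : Fin 4), j) else (2, p.2)) else (1, j+1)
      with hf
    have hout : ∀ p ∈ closedNbhd G4 (1, j) \ S0 n, (∃ b, p = ((0 : Fin 4), b)) ∨ p = (2, 0) := by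
      rintro ⟨a, b⟩ ⟨hN, hnS⟩
      rw [nbhd_1] at hN
      simp only [S0, Set.mem_setOf_eq, not_or, not_and, not_not] at hnS
      rcases hN with (h0 | h2) | ⟨h1, -⟩
      · exact Or.inl ⟨b, by rw [show a = 0 from h0]⟩
      · right
        have hb := hnS.2 h2
        rw [show a = 2 from h2, hb]
      · exact absurd h1 hnS.1
    apply Set.ncard_le_ncard_of_injOn f
    · rintro p hp
      rcases hout p hp with ⟨b, rfl⟩ | rfl
      · by_cases hb : b = 0
        · subst hb
          have : f (0, 0) = (1, j) := by simp [hf]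
          rw [this]
          exact ⟨mem_closedNbhd.mpr (Or.inl rfl), Or.inl rfl⟩
        · have : f (0, b) = (2, b) := by simp [hf, hb]
          rw [this]
          constructor
          · exact mem_closedNbhd.mpr (Or.inr (Or.inl ((path_adj_1 2).mpr (Or.inr rfl))))
          · exact Or.inr ⟨rfl, hb⟩
      · have : f (2, 0) = (1, j + 1) := by
          simp only [hf]
          rw [if_neg (by decide)]
        rw [this]
        constructor
        · exact mem_closedNbhd.mpr (Or.inr (Or.inr ⟨rfl, cyc_adj.mpr (Or.inl rfl)⟩))
        · exact Or.inl rfl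
    · rintro p hp q hq hfq
      rcases hout p hp with ⟨b, rfl⟩ | rfl <;> rcases hout q hq with ⟨b', rfl⟩ | rfl
      · by_cases hb : b = 0 <;> by_cases hb' : b' = 0
        · rw [hb, hb']
        · simp only [hf, if_pos rfl, if_pos hb, if_neg hb', Prod.mk.injEq] at hfq
          exact absurd hfq.1 (by decide)
        · simp only [hf, if_pos rfl, if_pos hb', if_neg hb, Prod.mk.injEq] at hfq
          exact absurd hfq.1 (by decide)
        · simp only [hf, if_pos rfl, if_neg hb, if_neg hb', Prod.mk.injEq] at hfq
          rw [hfq.2]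
      · by_cases hb : b = 0
        · simp only [hf, if_pos rfl, if_pos hb, if_neg (show ¬((2:Fin 4) = 0) by decide),
            Prod.mk.injEq] at hfq
          exact absurd hfq.2 (fun h => fin_add_one_ne j h.symm)
        · simp only [hf, if_pos rfl, if_neg hb, if_neg (show ¬((2:Fin 4) = 0) by decide),
            Prod.mk.injEq] at hfq
          exact absurd hfq.1 (by decide)
      · by_cases hb : b' = 0
        · simp only [hf, if_pos rfl, if_pos hb, if_neg (show ¬((2:Fin 4) = 0) by decide),
            Prod.mk.injEq] at hfq
          exact absurd hfq.2 (fun h => fin_add_one_ne j h)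
        · simp only [hf, if_pos rfl, if_neg hb, if_neg (show ¬((2:Fin 4) = 0) by decide),
            Prod.mk.injEq] at hfq
          exact absurd hfq.1 (by decide)
      · rfl
  · -- c = 2, j ≠ 0
    have hc2' : c = 2 := hc2
    subst hc2'
    set f : Fin 4 × Fin (n+4) → Fin 4 × Fin (n+4) :=
      fun p => if p.1 = 3 then ((1 : Fin 4), p.2) else (2, j) with hf
    have hout : ∀ p ∈ closedNbhd G4 (2, j) \ S0 n, (∃ b, p = ((3 : Fin 4), b)) ∨ p = (2, 0) := by
      rintro ⟨a, b⟩ ⟨hN, hnS⟩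
      rw [nbhd_2] at hN
      simp only [S0, Set.mem_setOf_eq, not_or, not_and, not_not] at hnS
      rcases hN with (h1 | h3) | ⟨h2, -⟩
      · exact absurd h1 hnS.1
      · exact Or.inl ⟨b, by rw [show a = 3 from h3]⟩
      · right
        have hb := hnS.2 h2
        rw [show a = 2 from h2, hb]
    apply Set.ncard_le_ncard_of_injOn f
    · rintro p hp
      rcases hout p hp with ⟨b, rfl⟩ | rfl
      · have : f (3, b) = (1, b) := by simp [hf]
        rw [this]
        constructor
        · exact mem_closedNbhd.mpr (Or.inr (Or.inl ((path_adj_2 1).mpr (Or.inl rfl))))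
        · exact Or.inl rfl
      · have : f (2, 0) = (2, j) := by
          simp only [hf]
          rw [if_neg (by decide)]
        rw [this]
        exact ⟨mem_closedNbhd.mpr (Or.inl rfl), Or.inr ⟨rfl, hj0⟩⟩
    · rintro p hp q hq hfq
      rcases hout p hp with ⟨b, rfl⟩ | rfl <;> rcases hout q hq with ⟨b', rfl⟩ | rfl
      · simp only [hf, if_pos rfl, Prod.mk.injEq] at hfq
        rw [hfq.2]
      · simp only [hf, if_pos rfl, if_neg (show ¬((2:Fin 4) = 3) by decide),
          Prod.mk.injEq] at hfq
        exact absurd hfq.1 (by decide)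
      · simp only [hf, if_pos rfl, if_neg (show ¬((2:Fin 4) = 3) by decide),
          Prod.mk.injEq] at hfq
        exact absurd hfq.1 (by decide)
      · rfl

lemma S0_dom : ∀ v, v ∈ S0 n ∨ ∃ u ∈ S0 n, (G4).Adj v u := by
  rintro ⟨c, b⟩
  fin_cases c
  · exact Or.inr ⟨(1, b), Or.inl rfl, Or.inl ((path_adj_0 1).mpr rfl)⟩
  · exact Or.inl (Or.inl rfl)
  · exact Or.inr ⟨(1, b), Or.inl rfl, Or.inl ((path_adj_2 1).mpr (Or.inl rfl))⟩
  · exact Or.inr ⟨(2, 1), Or.inr ⟨rfl, fin_one_ne_zero⟩, Or.inl ((path_adj_3 2).mpr rfl)⟩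

theorem stmt_5 (m : ℕ) (hm : 4 ≤ m) :
    gdaNumber (lexProd (SimpleGraph.pathGraph 4) (SimpleGraph.cycleGraph m)) = 2 * m - 1 := by
  obtain ⟨n, rfl⟩ : ∃ k, m = k + 4 := ⟨m - 4, by omega⟩
  have hGDA : IsGDA (lexProd (SimpleGraph.pathGraph 4) (SimpleGraph.cycleGraph (n+4))) (S0 n) :=
    ⟨S0_defense, S0_dom⟩
  have hmem : (2 * (n + 4) - 1) ∈ {k | ∃ S : Set (Fin 4 × Fin (n+4)),
      IsGDA (lexProd (SimpleGraph.pathGraph 4) (SimpleGraph.cycleGraph (n+4))) S ∧ S.ncard = k} :=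
    ⟨S0 n, hGDA, ncard_S0⟩
  unfold gdaNumber
  apply le_antisymm
  · exact Nat.sInf_le hmem
  · apply le_csInf ⟨_, hmem⟩
    rintro k ⟨S, hS, rfl⟩
    exact lower_bound hS
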